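/- Let G be a finite simple graph with no isolated vertices whose vertex set can be partitioned into c independent sets S₁, …, S_c. If G has no minimal vertex cover of size at least k, then |V(G)| ≤ c(k−1). -/
import Mathlib


def IsVC {V : Type*} (G : SimpleGraph V) (X : Finset V) : Prop :=
  ∀ ⦃a b : V⦄, G.Adj a b → a ∈ X ∨ b ∈ X

def IsMinVC {V : Type*} (G : SimpleGraph V) (X : Finset V) : Prop :=
  IsVC G X ∧ ∀ Y : Finset V, Y ⊂ X → ¬ IsVC G Y

lemma exists_minVC_subset {V : Type*} (G : SimpleGraph V) :
    ∀ X : Finset V, IsVC G X → ∃ Y ⊆ X, IsMinVC G Y := by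
  intro X
  induction X using Finset.strongInductionOn with
  | _ X ih =>
    intro hX
    by_cases h : ∃ Y : Finset V, Y ⊂ X ∧ IsVC G Y
    · obtain ⟨Y, hYX, hY⟩ := h
      obtain ⟨Z, hZY, hZ⟩ := ih Y hYX hY
      exact ⟨Z, hZY.trans hYX.subset, hZ⟩
    · push_neg at h
      exact ⟨X, subset_rfl, hX, h⟩

/-- Linear kernel for MMVC on properly `c`-colorable graphs: if a graph with no
isolated vertices admits a partition of its vertex set into `c` independent
sets and has no minimal vertex cover of size at least `k`, then it has at most
`c(k-1)` vertices. -/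
theorem colorable_kernel {V : Type*} [Fintype V] [DecidableEq V]
    (G : SimpleGraph V) (c k : ℕ) (hk : 1 ≤ k)
    (f : V → Fin c) (hf : ∀ a b : V, G.Adj a b → f a ≠ f b)
    (hiso : ∀ v : V, ∃ u : V, G.Adj v u)
    (hno : ¬ ∃ X : Finset V, IsMinVC G X ∧ k ≤ X.card) :
    Fintype.card V ≤ c * (k - 1) := by
  classical
  set N : Fin c → Finset V :=
    fun i => Finset.univ.filter (fun v => ∃ u, f u = i ∧ G.Adj u v) with hN
  have hcard : ∀ i, (N i).card ≤ k - 1 := by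
    intro i
    have hVC : IsVC G (Finset.univ.filter (fun v => f v ≠ i)) := by
      intro a b hab
      by_cases ha : f a = i
      · right; simp only [Finset.mem_filter, Finset.mem_univ, true_and]
        intro hb; exact hf a b hab (ha.trans hb.symm)
      · left; simp [ha]
    obtain ⟨Y, hYsub, hYmin⟩ := exists_minVC_subset G _ hVC
    have hNY : N i ⊆ Y := by
      intro v hv
      simp only [hN, Finset.mem_filter, Finset.mem_univ, true_and] at hv
      obtain ⟨u, hu, huv⟩ := hv
      have huY : u ∉ Y := by
        intro h
        have := hYsub h
        simp only [Finset.mem_filter] at this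
        exact this.2 hu
      rcases hYmin.1 huv with h | h
      · exact absurd h huY
      · exact h
    have hYk : Y.card < k := by
      by_contra h
      exact hno ⟨Y, hYmin, le_of_not_gt h⟩
    have := Finset.card_le_card hNY
    omega
  have hcover : (Finset.univ : Finset V) ⊆ Finset.univ.biUnion N := by
    intro v _
    obtain ⟨u, huv⟩ := hiso v
    refine Finset.mem_biUnion.2 ⟨f u, Finset.mem_univ _, ?_⟩
    simp only [hN, Finset.mem_filter, Finset.mem_univ, true_and]
    exact ⟨u, rfl, huv.symm⟩
  calc Fintype.card V = (Finset.univ : Finset V).card := rfl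
    _ ≤ (Finset.univ.biUnion N).card := Finset.card_le_card hcover
    _ ≤ ∑ i, (N i).card := Finset.card_biUnion_le
    _ ≤ ∑ _i : Fin c, (k - 1) := Finset.sum_le_sum (fun i _ => hcard i)
    _ = c * (k - 1) := by simp [Finset.sum_const, mul_comm]
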